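/- Let 𝔥 be a reductive subalgebra of a real semisimple Lie algebra 𝔤 (preserved by a Cartan involution θ), with decomposition 𝔥 = Z_𝔨(𝔥) ⊕ Z_𝔭(𝔥) ⊕ [𝔥,𝔥], where Z_𝔨(𝔥) and Z_𝔭(𝔥) are the intersections of the center of 𝔥 with 𝔨 and 𝔭 respectively. If X ∈ 𝔥 is hyperbolic in 𝔤 and X = X_𝔨 + X_𝔭 + X' is its decomposition, then X_𝔨 = 0 and X' is a hyperbolic element of the semisimple Lie algebra [𝔥,𝔥]. -/

import Mathlib

open scoped RealInnerProductSpace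

section Helpers

/-- The trace of a skew-adjoint operator on a real inner product space is zero. -/
lemma skew_trace_eq_zero {E : Type*} [NormedAddCommGroup E] [InnerProductSpace ℝ E]
    [FiniteDimensional ℝ E] (T : E →ₗ[ℝ] E)
    (h : ∀ x y : E, ⟪T x, y⟫ = -⟪x, T y⟫) :
    LinearMap.trace ℝ E T = 0 := by
  classical
  let b := stdOrthonormalBasis ℝ E
  rw [LinearMap.trace_eq_matrix_trace ℝ b.toBasis T, Matrix.trace]
  refine Finset.sum_eq_zero fun i _ => ?_
  have h1 : Matrix.diag (LinearMap.toMatrix b.toBasis b.toBasis T) i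
      = ⟪b i, T (b i)⟫ := by
    simp [Matrix.diag, LinearMap.toMatrix_apply, OrthonormalBasis.coe_toBasis_repr_apply,
      OrthonormalBasis.repr_apply_apply, OrthonormalBasis.coe_toBasis]
  have h2 : ⟪b i, T (b i)⟫ = -⟪b i, T (b i)⟫ := by
    conv_lhs => rw [real_inner_comm, h]
  rw [h1]
  linarith

/-- Eigenspaces are invariant under commuting operators. -/
lemma mapsTo_eigenspace_of_comm' {E : Type*} [AddCommGroup E] [Module ℝ E]
    {f g : Module.End ℝ E} (h : f * g = g * f) (μ : ℝ) :
    Set.MapsTo g (Module.End.eigenspace f μ) (Module.End.eigenspace f μ) := by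
  intro x hx
  rw [SetLike.mem_coe, Module.End.mem_eigenspace_iff] at hx ⊢
  have hfg : f (g x) = g (f x) := by
    have h2 := congrFun (congrArg DFunLike.coe h) x
    simpa [Module.End.mul_apply] using h2
  rw [hfg, hx, map_smul]

end Helpers

theorem hyperbolic_decomposition_in_reductive_subalgebra
    (𝔤 : Type*) [LieRing 𝔤] [LieAlgebra ℝ 𝔤] [FiniteDimensional ℝ 𝔤]
    [LieAlgebra.IsSemisimple ℝ 𝔤]
    (θ : 𝔤 →ₗ⁅ℝ⁆ 𝔤) (hθinv : ∀ x, θ (θ x) = x)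
    (hθcartan : ∀ x : 𝔤, x ≠ 0 → (killingForm ℝ 𝔤) x (θ x) < 0)
    (𝔥 : LieSubalgebra ℝ 𝔤) (h𝔥θ : ∀ x ∈ 𝔥, θ x ∈ 𝔥)
    -- the derived subalgebra `[𝔥,𝔥]`
    (𝔥' : Submodule ℝ 𝔤)
    (h𝔥' : 𝔥' = Submodule.span ℝ {z : 𝔤 | ∃ x ∈ 𝔥, ∃ y ∈ 𝔥, z = ⁅x, y⁆})
    (X Xk Xp X' : 𝔤) (hX : X ∈ 𝔥)
    -- `X = X_𝔨 + X_𝔭 + X'` with `X_𝔨 ∈ Z(𝔥) ∩ 𝔨`, `X_𝔭 ∈ Z(𝔥) ∩ 𝔭`, `X' ∈ [𝔥,𝔥]`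
    (hsum : X = Xk + Xp + X')
    (hXk𝔥 : Xk ∈ 𝔥) (hXkZ : ∀ y ∈ 𝔥, ⁅Xk, y⁆ = 0) (hXk𝔨 : θ Xk = Xk)
    (hXp𝔥 : Xp ∈ 𝔥) (hXpZ : ∀ y ∈ 𝔥, ⁅Xp, y⁆ = 0) (hXp𝔭 : θ Xp = -Xp)
    (hX' : X' ∈ 𝔥')
    -- `X` is hyperbolic in `𝔤`
    (hXhyp : ⨆ c : ℝ, Module.End.eigenspace (LieAlgebra.ad ℝ 𝔤 X) c = ⊤) :
    Xk = 0 ∧ 𝔥' ≤ ⨆ c : ℝ, Module.End.eigenspace (LieAlgebra.ad ℝ 𝔤 X') c := by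
  classical
  set B : LinearMap.BilinForm ℝ 𝔤 := killingForm ℝ 𝔤 with hBdef
  -- θ is a Lie algebra automorphism
  let e : 𝔤 ≃ₗ⁅ℝ⁆ 𝔤 := { θ with invFun := θ, left_inv := hθinv, right_inv := hθinv }
  have hBθ : ∀ x y : 𝔤, B (θ x) (θ y) = B x y := fun x y =>
    LieAlgebra.killingForm_of_equiv_apply e x y
  have hBsymm : ∀ x y : 𝔤, B x y = B y x := fun x y => LieModule.traceForm_comm ℝ 𝔤 𝔤 x y
  have hBinv : ∀ x y z : 𝔤, B ⁅x, y⁆ z = B x ⁅y, z⁆ := fun x y z =>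
    LieModule.traceForm_apply_lie_apply ℝ 𝔤 𝔤 x y z
  -- the inner product ⟪x, y⟫ = -B(x, θ y)
  have hpos : ∀ x : 𝔤, x ≠ 0 → 0 < -B x (θ x) := fun x hx => by
    have := hθcartan x hx; linarith
  let core : InnerProductSpace.Core ℝ 𝔤 :=
  { inner := fun x y => -B x (θ y)
    conj_inner_symm := by
      intro x y
      simp only [starRingEnd_apply, star_trivial, neg_inj]
      calc B y (θ x) = B (θ y) (θ (θ x)) := (hBθ y (θ x)).symm
        _ = B (θ y) x := by rw [hθinv]
        _ = B x (θ y) := hBsymm _ _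
    re_inner_nonneg := by
      intro x
      rcases eq_or_ne x 0 with rfl | hx
      · simp
      · exact (hpos x hx).le
    add_left := by intro x y z; simp [map_add, LinearMap.add_apply]; ring
    smul_left := by
      intro x y r
      simp only [map_smul, LinearMap.smul_apply, smul_eq_mul, starRingEnd_apply, star_trivial]
      ring
    definite := by
      intro x hx
      by_contra h
      exact absurd hx (ne_of_gt (hpos x h)) }
  letI : NormedAddCommGroup 𝔤 := core.toNormedAddCommGroup
  letI : InnerProductSpace ℝ 𝔤 := InnerProductSpace.ofCore core.toCore
  have hinner : ∀ x y : 𝔤, ⟪x, y⟫ = -B x (θ y) := fun x y => rfl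
  -- the operators
  set S : Module.End ℝ 𝔤 := LieAlgebra.ad ℝ 𝔤 X with hSdef
  set A : Module.End ℝ 𝔤 := LieAlgebra.ad ℝ 𝔤 Xk with hAdef
  set P : Module.End ℝ 𝔤 := LieAlgebra.ad ℝ 𝔤 Xp with hPdef
  have hcomm : ∀ a b : 𝔤, ⁅a, b⁆ = 0 →
      LieAlgebra.ad ℝ 𝔤 a * LieAlgebra.ad ℝ 𝔤 b = LieAlgebra.ad ℝ 𝔤 b * LieAlgebra.ad ℝ 𝔤 a := by
    intro a b hab
    ext z
    simp only [Module.End.mul_apply, LieAlgebra.ad_apply]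
    rw [leibniz_lie, hab, zero_lie, zero_add]
  have hAS : A * S = S * A := hcomm Xk X (hXkZ X hX)
  have hPS : P * S = S * P := hcomm Xp X (hXpZ X hX)
  -- skewness of A, symmetry of P
  have hadj : ∀ (w x y : 𝔤), ⟪LieAlgebra.ad ℝ 𝔤 w x, y⟫ = B x ⁅w, θ y⁆ := by
    intro w x y
    rw [hinner, LieAlgebra.ad_apply]
    have hskew : (⁅w, x⁆ : 𝔤) = -⁅x, w⁆ := (lie_skew w x).symm
    rw [hskew, map_neg, LinearMap.neg_apply, neg_neg]
    exact hBinv x w (θ y)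
  have hAskew : ∀ x y : 𝔤, ⟪A x, y⟫ = -⟪x, A y⟫ := by
    intro x y
    rw [hadj Xk x y, hinner]
    have : θ ⁅Xk, y⁆ = ⁅Xk, θ y⁆ := by rw [LieHom.map_lie, hXk𝔨]
    rw [LieAlgebra.ad_apply, this]
    ring
  have hPsymm : (P : 𝔤 →ₗ[ℝ] 𝔤).IsSymmetric := by
    intro x y
    rw [hadj Xp x y, hinner]
    have : θ ⁅Xp, y⁆ = -⁅Xp, θ y⁆ := by rw [LieHom.map_lie, hXp𝔭]; simp
    rw [LieAlgebra.ad_apply, this, map_neg]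
    ring
  -- Part 1 : B(Xk, X) = 0 via the trace argument
  have hindep := Module.End.eigenspaces_iSupIndep S
  have hint : DirectSum.IsInternal (fun c : ℝ => Module.End.eigenspace S c) :=
    DirectSum.isInternal_submodule_of_iSupIndep_of_iSup_eq_top hindep hXhyp
  have hfin : {c : ℝ | Module.End.eigenspace S c ≠ ⊥}.Finite :=
    WellFoundedGT.finite_ne_bot_of_iSupIndep hindep
  have hASmaps : ∀ c : ℝ, Set.MapsTo (A * S)
      (Module.End.eigenspace S c) (Module.End.eigenspace S c) := by
    intro c x hx
    exact mapsTo_eigenspace_of_comm' hAS.symm c (mapsTo_eigenspace_of_comm' rfl c hx)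
  have hAmaps : ∀ c : ℝ, Set.MapsTo A
      (Module.End.eigenspace S c) (Module.End.eigenspace S c) :=
    fun c => mapsTo_eigenspace_of_comm' hAS.symm c
  have hBkX : B Xk X = 0 := by
    have htr : B Xk X = LinearMap.trace ℝ 𝔤 (A * S) := by
      rw [hBdef, killingForm_apply_apply]
      rfl
    rw [htr, LinearMap.trace_eq_sum_trace_restrict' hint hfin
      (fun c => (hASmaps c))]
    refine Finset.sum_eq_zero fun c _ => ?_
    have hres : (A * S).restrict (hASmaps c) = c • (A.restrict (hAmaps c)) := by
      ext x
      have hx : S (x : 𝔤) = c • (x : 𝔤) := Module.End.mem_eigenspace_iff.mp x.2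
      show A (S (x : 𝔤)) = c • A (x : 𝔤)
      rw [hx, map_smul]
    rw [hres, map_smul]
    have : LinearMap.trace ℝ _ (A.restrict (hAmaps c)) = 0 := by
      refine skew_trace_eq_zero _ fun x y => ?_
      have h1 : ((A.restrict (hAmaps c)) x : 𝔤) = A (x : 𝔤) := rfl
      rw [Submodule.coe_inner, Submodule.coe_inner, h1]
      have h2 : ((A.restrict (hAmaps c)) y : 𝔤) = A (y : 𝔤) := rfl
      rw [h2]
      exact hAskew _ _
    rw [this]
    simp
  -- B(Xk, Xp) = 0
  have hBkp : B Xk Xp = 0 := by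
    have h1 := hBθ Xk Xp
    rw [hXk𝔨, hXp𝔭, map_neg] at h1
    linarith
  -- B(Xk, X') = 0
  have hBkX' : B Xk X' = 0 := by
    rw [h𝔥'] at hX'
    refine Submodule.span_induction ?_ ?_ ?_ ?_ hX'
    · rintro z ⟨a, ha, b, hb, rfl⟩
      rw [← hBinv Xk a b, hXkZ a ha]
      simp
    · simp
    · intro u v _ _ hu hv
      rw [map_add, hu, hv, add_zero]
    · intro r u _ hu
      rw [map_smul, hu, smul_zero]
  -- conclude Xk = 0
  have hBkk : B Xk Xk = 0 := by
    have hexp : B Xk X = B Xk Xk + B Xk Xp + B Xk X' := by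
      rw [hsum]; simp [map_add]
    rw [hBkX, hBkp, hBkX'] at hexp
    linarith
  have hXk0 : Xk = 0 := by
    by_contra h
    have := hθcartan Xk h
    rw [hXk𝔨] at this
    rw [hBkk] at this  -- note: B = killingForm
    exact lt_irrefl 0 this
  refine ⟨hXk0, ?_⟩
  -- Part 2
  have hD : LieAlgebra.ad ℝ 𝔤 X' = S - P := by
    have hX'eq : X' = X - Xp := by rw [hsum, hXk0]; abel
    rw [hX'eq, map_sub]
  have hle : ∀ c : ℝ, Module.End.eigenspace S c ≤
      ⨆ e : ℝ, Module.End.eigenspace (S - P) e := by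
    intro c
    have hdecomp := LinearMap.IsSymmetric.iSup_eigenspace_inf_eigenspace_of_commute
      (A := (S : 𝔤 →ₗ[ℝ] 𝔤)) (α := c) hPsymm hPS.symm
    rw [← hdecomp]
    refine iSup_le fun d => ?_
    refine le_trans ?_ (le_iSup _ (c - d))
    intro x hx
    obtain ⟨hxS, hxP⟩ := Submodule.mem_inf.mp hx
    rw [Module.End.mem_eigenspace_iff] at hxS hxP ⊢
    rw [LinearMap.sub_apply, hxS, hxP, sub_smul]
  have htop : (⨆ e : ℝ, Module.End.eigenspace (S - P) e) = ⊤ := by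
    rw [eq_top_iff, ← hXhyp]
    exact iSup_le hle
  rw [hD, htop]
  exact le_top
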